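/- For each natural number s, let r_s be the unique positive real root of the polynomial p_s(x) = x^{s+1} − Σ_{i=0}^s (i+1)·x^{s−i}. Then the sequence (r_s) is monotonically increasing and converges to (3+√5)/2. -/

import Mathlib

open Finset

noncomputable def phiAux : ℝ := (3 + Real.sqrt 5) / 2

noncomputable def auxS (s : ℕ) (x : ℝ) : ℝ :=
  ∑ i ∈ Finset.range (s + 1), ((i : ℝ) + 1) * x⁻¹ ^ (i + 1)

lemma sqrt5_gt : (2 : ℝ) < Real.sqrt 5 := by
  have : (2 : ℝ) = Real.sqrt 4 := by
    rw [show (4 : ℝ) = 2 ^ 2 by norm_num, Real.sqrt_sq (by norm_num)]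
  rw [this]
  exact Real.sqrt_lt_sqrt (by norm_num) (by norm_num)

lemma phiAux_gt_one : (1 : ℝ) < phiAux := by
  have := sqrt5_gt; unfold phiAux; linarith

lemma eq_iff_auxS {s : ℕ} {x : ℝ} (hx : 0 < x) :
    x ^ (s + 1) = ∑ i ∈ Finset.range (s + 1), ((i : ℝ) + 1) * x ^ (s - i) ↔ auxS s x = 1 := by
  have hxne : x ≠ 0 := hx.ne'
  have h : ∀ i ∈ Finset.range (s + 1),
      ((i : ℝ) + 1) * x ^ (s - i) = x ^ (s + 1) * (((i : ℝ) + 1) * x⁻¹ ^ (i + 1)) := by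
    intro i hi
    rw [Finset.mem_range] at hi
    have h1 : i + 1 ≤ s + 1 := hi
    have hx2 : x ^ (s - i) = x ^ (s + 1) * (x ^ (i + 1))⁻¹ := by
      rw [← pow_sub₀ x hxne h1]; congr 1; omega
    rw [hx2, inv_pow]; ring
  rw [Finset.sum_congr rfl h, ← Finset.mul_sum]
  unfold auxS
  constructor
  · intro he
    exact (mul_left_cancel₀ (pow_ne_zero (s + 1) hxne) (by rw [mul_one]; exact he)).symm
  · intro he; rw [he, mul_one]

lemma auxS_anti {s : ℕ} {x y : ℝ} (hx : 0 < x) (hxy : x < y) : auxS s y < auxS s x := by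
  apply Finset.sum_lt_sum_of_nonempty Finset.nonempty_range_add_one
  intro i _
  have hy : 0 < y := hx.trans hxy
  have hinv : y⁻¹ < x⁻¹ := by
    rw [inv_lt_inv₀ hy hx]; exact hxy
  have hpowlt : y⁻¹ ^ (i + 1) < x⁻¹ ^ (i + 1) :=
    pow_lt_pow_left₀ hinv (by positivity) (by omega)
  have hpos : (0 : ℝ) < (i : ℝ) + 1 := by positivity
  exact mul_lt_mul_of_pos_left hpowlt hpos

lemma lt_of_auxS_lt {s : ℕ} {x y : ℝ} (hx : 0 < x) (h : auxS s x < auxS s y) : y < x := by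
  by_contra hc
  push_neg at hc
  rcases hc.lt_or_eq with h1 | h1
  · exact absurd (auxS_anti hx h1) (by linarith)
  · rw [h1] at h; exact lt_irrefl _ h

lemma auxHasSum {x : ℝ} (hx : 1 < x) :
    HasSum (fun n : ℕ => ((n : ℝ) + 1) * x⁻¹ ^ (n + 1)) (x⁻¹ / (1 - x⁻¹) ^ 2) := by
  have hx0 : (0 : ℝ) < x := by linarith
  have hnorm : ‖x⁻¹‖ < 1 := by
    rw [Real.norm_eq_abs, abs_of_pos (inv_pos.mpr hx0)]
    exact inv_lt_one_of_one_lt₀ hx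
  have h := hasSum_coe_mul_geometric_of_norm_lt_one (r := x⁻¹) hnorm
  have h2 := (hasSum_nat_add_iff (f := fun n : ℕ => (n : ℝ) * x⁻¹ ^ n) 1).mpr (by simpa using h)
  convert h2 using 2 with n
  · rfl
  push_cast
  ring

lemma val_eq' {x : ℝ} (h1 : 1 < x) : x⁻¹ / (1 - x⁻¹) ^ 2 = x / (x - 1) ^ 2 := by
  have hx0 : x ≠ 0 := by intro h; rw [h] at h1; linarith
  have hx1 : x - 1 ≠ 0 := by intro h; nlinarith [sub_eq_zero.mp h]
  have h3 : 1 - x⁻¹ ≠ 0 := by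
    have := inv_lt_one_of_one_lt₀ h1
    intro h; nlinarith [sub_eq_zero.mp h]
  field_simp

lemma phiAux_key : (phiAux - 1) ^ 2 = phiAux := by
  have ht : Real.sqrt 5 ^ 2 = 5 := Real.sq_sqrt (by norm_num)
  unfold phiAux
  linear_combination ht / 4

lemma val_gt {x : ℝ} (h1 : 1 < x) (h2 : x < phiAux) : 1 < x / (x - 1) ^ 2 := by
  have t2 : Real.sqrt 5 ^ 2 = 5 := Real.sq_sqrt (by norm_num)
  have tgt := sqrt5_gt
  have hd : (0 : ℝ) < (x - 1) ^ 2 := pow_pos (by linarith) 2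
  rw [lt_div_iff₀ hd, one_mul]
  unfold phiAux at h2
  nlinarith [mul_pos (show (0 : ℝ) < x - (3 - Real.sqrt 5) / 2 by nlinarith)
    (show (0 : ℝ) < (3 + Real.sqrt 5) / 2 - x by linarith)]

theorem positive_roots_converge
    (r : ℕ → ℝ)
    (hroot : ∀ s : ℕ, 0 < r s ∧
      (r s) ^ (s + 1) = ∑ i ∈ Finset.range (s + 1), ((i : ℝ) + 1) * (r s) ^ (s - i))
    (huniq : ∀ s : ℕ, ∀ x : ℝ, 0 < x →
      x ^ (s + 1) = ∑ i ∈ Finset.range (s + 1), ((i : ℝ) + 1) * x ^ (s - i) → x = r s) :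
    Monotone r ∧
      Filter.Tendsto r Filter.atTop (nhds ((3 + Real.sqrt 5) / 2)) := by
  have hS : ∀ s, auxS s (r s) = 1 := fun s => (eq_iff_auxS (hroot s).1).mp (hroot s).2
  have hstep : ∀ s (x : ℝ), 0 < x → auxS s x < auxS (s + 1) x := by
    intro s x hx
    unfold auxS
    conv_rhs => rw [Finset.sum_range_succ]
    have : (0 : ℝ) < (((s + 1 : ℕ) : ℝ) + 1) * x⁻¹ ^ (s + 1 + 1) := by positivity
    linarith
  have hmono : Monotone r := by
    apply monotone_nat_of_le_succ
    intro s
    have h2 : auxS (s + 1) (r (s + 1)) < auxS (s + 1) (r s) := by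
      rw [hS (s + 1), ← hS s]
      exact hstep s (r s) (hroot s).1
    exact (lt_of_auxS_lt (hroot (s + 1)).1 h2).le
  have hφ1 := phiAux_gt_one
  have hφsum := auxHasSum hφ1
  have hφval : phiAux⁻¹ / (1 - phiAux⁻¹) ^ 2 = 1 := by
    rw [val_eq' hφ1, phiAux_key.symm]
    have : phiAux - 1 ≠ 0 := by intro h; nlinarith [sub_eq_zero.mp h]
    rw [phiAux_key]
    field_simp
    linarith [phiAux_key]
  have hub : ∀ s, r s < phiAux := by
    intro s
    have hlt : auxS s phiAux < 1 := by
      have h1 : auxS s phiAux < auxS (s + 1) phiAux := hstep s phiAux (by linarith)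
      have h2 : auxS (s + 1) phiAux ≤ 1 := by
        rw [← hφval, ← hφsum.tsum_eq]
        exact Summable.sum_le_tsum _ (fun i _ => by positivity) hφsum.summable
      linarith
    refine lt_of_auxS_lt (s := s) (by linarith : (0:ℝ) < phiAux) ?_
    rw [hS s]; exact hlt
  have hbdd : BddAbove (Set.range r) := ⟨phiAux, by rintro _ ⟨s, rfl⟩; exact (hub s).le⟩
  have htend := tendsto_atTop_ciSup hmono hbdd
  have hsup_le : (⨆ s, r s) ≤ phiAux := ciSup_le fun s => (hub s).le
  have hle_sup : phiAux ≤ ⨆ s, r s := by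
    by_contra hc
    push_neg at hc
    set L := ⨆ s, r s with hL
    set x := max L ((1 + phiAux) / 2) with hxdef
    have hx1 : 1 < x := lt_of_lt_of_le (by linarith) (le_max_right _ _)
    have hxφ : x < phiAux := max_lt hc (by linarith)
    have hsum := auxHasSum hx1
    have hT : 1 < x⁻¹ / (1 - x⁻¹) ^ 2 := by rw [val_eq' hx1]; exact val_gt hx1 hxφ
    have hev : ∀ᶠ n in Filter.atTop,
        1 < ∑ i ∈ Finset.range n, ((i : ℝ) + 1) * x⁻¹ ^ (i + 1) :=
      hsum.tendsto_sum_nat.eventually_const_lt hT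
    obtain ⟨n, hn, hn1⟩ := (hev.and (Filter.eventually_ge_atTop 1)).exists
    obtain ⟨s, rfl⟩ : ∃ s, n = s + 1 := ⟨n - 1, by omega⟩
    have hgt : auxS s (r s) < auxS s x := by rw [hS s]; exact hn
    have hxr : x < r s := lt_of_auxS_lt (hroot s).1 hgt
    have hrL : r s ≤ L := le_ciSup hbdd s
    have hLx : L ≤ x := le_max_left _ _
    linarith
  have : ((3 + Real.sqrt 5) / 2 : ℝ) = ⨆ s, r s := le_antisymm hle_sup hsup_le
  exact ⟨hmono, this ▸ htend⟩
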